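/- Let L be a complete lattice and p ∈ L with Ω(p) ≠ ∅, i.e., there exists x ≠ ⊥ with x ⊓ p = ⊥. Then p is strongly irreducible in L if and only if there exists q ∈ L with q ≠ ⊥ such that p is a pseudo-complement of q (i.e., p ⊓ q = ⊥ and every x ∈ L with x ⊓ q = ⊥ satisfies x ≤ p) and the interval [⊥, q] is uniform (i.e., for all x, y ≤ q with x ≠ ⊥ and y ≠ ⊥ one has x ⊓ y ≠ ⊥). -/
import Mathlib

/-- An element `p` of a lattice is *strongly irreducible* if
`a ⊓ b ≤ p` implies `a ≤ p` or `b ≤ p` for all `a b`. -/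
def StronglyIrreducible {α : Type*} [SemilatticeInf α] (p : α) : Prop :=
  ∀ a b : α, a ⊓ b ≤ p → a ≤ p ∨ b ≤ p

/-- Suppose `Ω(p) ≠ ∅`. Then `p` is strongly irreducible iff `p` is a pseudo-complement
of some element `q ≠ ⊥` with the interval `[⊥, q]` uniform. -/
theorem stronglyIrreducible_iff_pseudoComplement_uniform
    {α : Type*} [CompleteLattice α] (p : α)
    (hΩ : ∃ x : α, x ≠ ⊥ ∧ x ⊓ p = ⊥) :
    StronglyIrreducible p ↔
      ∃ q : α, q ≠ ⊥ ∧ p ⊓ q = ⊥ ∧ (∀ x : α, x ⊓ q = ⊥ → x ≤ p) ∧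
        (∀ x y : α, x ≤ q → y ≤ q → x ≠ ⊥ → y ≠ ⊥ → x ⊓ y ≠ ⊥) := by
  obtain ⟨q, hq0, hqp⟩ := hΩ
  constructor
  · intro hSI
    refine ⟨q, hq0, by rwa [inf_comm], ?_, ?_⟩
    · intro x hx
      rcases hSI x q (by rw [hx]; exact bot_le) with h | h
      · exact h
      · exact absurd (le_bot_iff.mp (hqp ▸ le_inf le_rfl h)) hq0
    · intro x y hxq hyq hx0 hy0 hxy
      rcases hSI x y (by rw [hxy]; exact bot_le) with h | h
      · exact hx0 (le_bot_iff.mp (hqp ▸ le_inf hxq h))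
      · exact hy0 (le_bot_iff.mp (hqp ▸ le_inf hyq h))
  · rintro ⟨q, hq0, hpq, hpc, huni⟩ a b hab
    by_cases ha : a ⊓ q = ⊥
    · exact Or.inl (hpc a ha)
    by_cases hb : b ⊓ q = ⊥
    · exact Or.inr (hpc b hb)
    exfalso
    apply huni (a ⊓ q) (b ⊓ q) inf_le_right inf_le_right ha hb
    rw [← le_bot_iff, ← hpq]
    exact le_inf (le_trans (inf_le_inf inf_le_left inf_le_left) hab)
      (le_trans inf_le_left inf_le_right)
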